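/- arXiv:2405.03225 — 6 statements merged into one kernel-verified Lean document; each statement's English description precedes it below -/
import Mathlib

section
/- Let n, K be positive integers, let Z be an n×K matrix with entries in {0,1} such that every row of Z has exactly one entry equal to 1 and every column of Z is nonzero, and let B be any K×K real matrix. Then ZᵀZ is positive definite; and writing S for the positive-definite square root of ZᵀZ, V = Z S⁻¹ and R = S B S, the matrix V has orthonormal columns (VᵀV = I_K) and V R Vᵀ = Z B Zᵀ. (Hence every multilayer stochastic blockmodel with membership matrix Z and block probability matrices B⁽ᵏ⁾ is a COSIE model with common subspace V = Z(ZᵀZ)^{-1/2} and score matrices R⁽ᵏ⁾ = (ZᵀZ)^{1/2} B⁽ᵏ⁾ (ZᵀZ)^{1/2}.) -/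
open Matrix

/-- Every multilayer stochastic blockmodel is a COSIE model: if `Z` is an `n × K`
membership matrix (0/1 entries, each row has exactly one `1`, each column nonzero)
and `B` is any `K × K` real matrix, then `ZᵀZ` is positive definite, and for the
positive-definite square root `S` of `ZᵀZ`, the matrix `V = Z S⁻¹` has orthonormal
columns and `V (S B S) Vᵀ = Z B Zᵀ`. -/
theorem mlsbm_is_cosie (n K : ℕ) (hn : 0 < n) (hK : 0 < K)
    (Z : Matrix (Fin n) (Fin K) ℝ)
    (hZ01 : ∀ i j, Z i j = 0 ∨ Z i j = 1)
    (hrow : ∀ i, ∃! j, Z i j = 1)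
    (hcol : ∀ j, ∃ i, Z i j ≠ 0)
    (B : Matrix (Fin K) (Fin K) ℝ) :
    (Zᵀ * Z).PosDef ∧
      ∀ S : Matrix (Fin K) (Fin K) ℝ, S.PosDef → S * S = Zᵀ * Z →
        (Z * S⁻¹)ᵀ * (Z * S⁻¹) = (1 : Matrix (Fin K) (Fin K) ℝ) ∧
        (Z * S⁻¹) * (S * B * S) * (Z * S⁻¹)ᵀ = Z * B * Zᵀ := by
  -- mulVec injectivity
  have hinj : ∀ x : Fin K → ℝ, x ≠ 0 → Z *ᵥ x ≠ 0 := by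
    intro x hx hZx
    apply hx
    funext j
    obtain ⟨i, hi⟩ := hcol j
    have hij : Z i j = 1 := (hZ01 i j).resolve_left hi
    obtain ⟨j0, hj0, huniq⟩ := hrow i
    have : j = j0 := huniq j hij
    subst this
    have hval : (Z *ᵥ x) i = x j := by
      simp only [mulVec, dotProduct]
      rw [Finset.sum_eq_single j]
      · rw [hij, one_mul]
      · intro b _ hb
        rcases hZ01 i b with h0 | h1
        · rw [h0, zero_mul]
        · exact absurd (huniq b h1) hb
      · simp
    have := congrFun hZx i
    simp only [Pi.zero_apply] at this
    simp [this] at hval ⊢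
    exact hval.symm
  constructor
  · rw [posDef_iff_dotProduct_mulVec]; constructor
    · ext i j
      simp [conjTranspose, mul_comm, Matrix.mul_apply, mul_comm]
    · intro x hx
      have h1 : star x ⬝ᵥ ((Zᵀ * Z) *ᵥ x) = (Z *ᵥ x) ⬝ᵥ (Z *ᵥ x) := by
        rw [← mulVec_mulVec, dotProduct_mulVec, star_trivial, vecMul_transpose]
      rw [h1]
      have := hinj x hx
      have : ∃ i, (Z *ᵥ x) i ≠ 0 := by
        by_contra h
        push_neg at h
        exact this (funext h)
      obtain ⟨i, hi⟩ := this
      have : (0:ℝ) < ∑ k, (Z *ᵥ x) k * (Z *ᵥ x) k := by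
        apply Finset.sum_pos' (fun k _ => mul_self_nonneg _)
        exact ⟨i, Finset.mem_univ i, mul_self_pos.mpr hi⟩
      simpa [dotProduct] using this
  · intro S hS hSS
    have hU : IsUnit S := hS.isUnit
    have hST : Sᵀ = S := by
      have := hS.isHermitian
      simpa [Matrix.IsHermitian, conjTranspose_eq_transpose_of_trivial] using this
    have hiT : (S⁻¹)ᵀ = S⁻¹ := by
      rw [transpose_nonsing_inv, hST]
    have hSinv : S⁻¹ * S = 1 := nonsing_inv_mul S ((isUnit_iff_isUnit_det S).mp hU)
    have hSinv' : S * S⁻¹ = 1 := mul_nonsing_inv S ((isUnit_iff_isUnit_det S).mp hU)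
    constructor
    · rw [transpose_mul, hiT]
      calc S⁻¹ * Zᵀ * (Z * S⁻¹) = S⁻¹ * (Zᵀ * Z) * S⁻¹ := by simp only [Matrix.mul_assoc]
        _ = S⁻¹ * (S * S) * S⁻¹ := by rw [hSS]
        _ = (S⁻¹ * S) * (S * S⁻¹) := by rw [← Matrix.mul_assoc, ← Matrix.mul_assoc]
        _ = 1 := by rw [hSinv, hSinv', one_mul]
    · rw [transpose_mul, hiT]
      calc Z * S⁻¹ * (S * B * S) * (S⁻¹ * Zᵀ)
          = Z * ((S⁻¹ * S) * B * (S * S⁻¹)) * Zᵀ := by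
            simp only [Matrix.mul_assoc]
        _ = Z * B * Zᵀ := by rw [hSinv, hSinv', Matrix.one_mul, Matrix.mul_one, Matrix.mul_assoc]
end

section
/- Let E be a real normed vector space, m ∈ ℕ, λ > 0, and q_1, …, q_m ∈ E such that ‖q_h − q_k‖ ≠ λ for all indices h, k. For each K ∈ ℕ let q_1^{(K)}, …, q_m^{(K)} ∈ E be points with q_i^{(K)} → q_i as K → ∞ for every i ∈ {1,…,m}. Then for all h, k ∈ {1,…,m}, the λ-shortest-path distances converge: d_{m,λ}(q^{(K)}; h, k) → d_{m,λ}(q; h, k) in [0,∞] as K → ∞. -/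
open Filter

/-- The `λ`-shortest-path distance between the `h`-th and `k`-th of the points
`q : Fin m → E`: the infimum over all finite index paths `h = i₀, i₁, …, i_v = k`
all of whose steps have length `< λ` of the total path length, valued in `[0,∞]`
(the infimum of the empty set being `∞`). -/
noncomputable def spDist {E : Type*} [NormedAddCommGroup E] {m : ℕ}
    (lam : ℝ) (q : Fin m → E) (h k : Fin m) : ENNReal :=
  sInf { d : ENNReal | ∃ (v : ℕ) (i : Fin (v + 1) → Fin m),
    i 0 = h ∧ i (Fin.last v) = k ∧
    (∀ j : Fin v, ‖q (i j.succ) - q (i j.castSucc)‖ < lam) ∧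
    d = ∑ j : Fin v, ENNReal.ofReal ‖q (i j.succ) - q (i j.castSucc)‖ }

namespace SPAux
open List

variable {E : Type*} [NormedAddCommGroup E] {m : ℕ}

/-- cost of a list of vertices -/
noncomputable def cost (q : Fin m → E) : List (Fin m) → ENNReal
  | a :: b :: t => ENNReal.ofReal ‖q b - q a‖ + cost q (b :: t)
  | _ => 0

@[simp] lemma cost_nil (q : Fin m → E) : cost q [] = 0 := rfl
@[simp] lemma cost_single (q : Fin m → E) (a : Fin m) : cost q [a] = 0 := rfl
@[simp] lemma cost_cons_cons (q : Fin m → E) (a b : Fin m) (t : List (Fin m)) :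
    cost q (a :: b :: t) = ENNReal.ofReal ‖q b - q a‖ + cost q (b :: t) := rfl

lemma cost_append (q : Fin m → E) (u : List (Fin m)) (a : Fin m) (t : List (Fin m)) :
    cost q (u ++ a :: t) = cost q (u ++ [a]) + cost q (a :: t) := by
  induction u with
  | nil => simp
  | cons b u IH =>
    cases u with
    | nil => simp
    | cons c u' =>
      simp only [cons_append, cost_cons_cons] at IH ⊢
      rw [IH, add_assoc]

lemma cost_cons_ofFn (q : Fin m → E) {v : ℕ} (a : Fin m) (g : Fin (v + 1) → Fin m) :
    cost q (a :: List.ofFn g) = ENNReal.ofReal ‖q (g 0) - q a‖ + cost q (List.ofFn g) := by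
  rw [List.ofFn_succ, cost_cons_cons, ← List.ofFn_succ]

lemma cost_ofFn (q : Fin m → E) : ∀ (v : ℕ) (i : Fin (v + 1) → Fin m),
    cost q (List.ofFn i) = ∑ j : Fin v, ENNReal.ofReal ‖q (i j.succ) - q (i j.castSucc)‖ := by
  intro v
  induction v with
  | zero => intro i; simp
  | succ v IH =>
    intro i
    rw [List.ofFn_succ, cost_cons_ofFn, IH, Fin.sum_univ_succ]
    simp [Fin.succ_castSucc, -Fin.castSucc_succ]


lemma decomp {α : Type*} : ∀ {l : List α}, ¬l.Nodup →
    ∃ (x : α) (l1 l2 l3 : List α), l = l1 ++ x :: l2 ++ x :: l3 := by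
  intro l
  induction l with
  | nil => intro hn; exact absurd List.nodup_nil hn
  | cons a t IH =>
    intro hn
    by_cases hmem : a ∈ t
    · obtain ⟨s, u, rfl⟩ := List.append_of_mem hmem
      exact ⟨a, [], s, u, by simp⟩
    · have ht : ¬t.Nodup := fun h => hn (List.nodup_cons.2 ⟨hmem, h⟩)
      obtain ⟨x, l1, l2, l3, rfl⟩ := IH ht
      exact ⟨x, a :: l1, l2, l3, by simp⟩

variable {E : Type*} [NormedAddCommGroup E] {m : ℕ}

def Adm (lam : ℝ) (q : Fin m → E) (h k : Fin m) (l : List (Fin m)) : Prop :=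
  l ≠ [] ∧ l.head? = some h ∧ l.getLast? = some k ∧
    l.Chain' (fun a b => ‖q b - q a‖ < lam)

lemma shorten_step {lam : ℝ} {q : Fin m → E} {h k : Fin m} {l : List (Fin m)}
    (hl : Adm lam q h k l) (hlong : m + 1 < l.length) :
    ∃ l', Adm lam q h k l' ∧ l'.length < l.length ∧ cost q l' ≤ cost q l := by
  obtain ⟨hne, hhd, hlast, hch⟩ := hl
  have hnd : ¬l.Nodup := by
    intro hnd
    have := hnd.length_le_card
    simp [Fintype.card_fin] at this
    omega
  obtain ⟨x, l1, l2, l3, rfl⟩ := decomp hnd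
  have hlast3 : (x :: l3).getLast? = some k := by
    rw [List.getLast?_append, List.getLast?_append] at hlast
    obtain ⟨y, hy⟩ := Option.isSome_iff_exists.1
      (List.getLast?_isSome.2 (List.cons_ne_nil x l3))
    rw [hy] at hlast ⊢
    simpa using hlast
  unfold List.Chain' at hch; rw [List.isChain_append] at hch
  obtain ⟨h1, h2, h3⟩ := hch
  rw [List.isChain_append] at h1
  obtain ⟨h11, h12, h13⟩ := h1
  refine ⟨l1 ++ x :: l3, ⟨by simp, ?_, ?_, ?_⟩, by simp, ?_⟩
  · simpa [Option.or_assoc] using hhd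
  · simp [List.getLast?_append, hlast3]
  · unfold List.Chain'; rw [List.isChain_append]
    refine ⟨h11, h2, fun a ha b hb => ?_⟩
    have hb' : x = b := by simpa using hb
    subst hb'
    exact h13 a ha x (by simp)
  · have e1 : cost q ((l1 ++ x :: l2) ++ x :: l3)
        = cost q ((l1 ++ x :: l2) ++ [x]) + cost q (x :: l3) :=
      cost_append q (l1 ++ x :: l2) x l3
    have e2 : (l1 ++ x :: l2) ++ [x] = l1 ++ x :: (l2 ++ [x]) := by simp
    have e3 : cost q (l1 ++ x :: (l2 ++ [x]))
        = cost q (l1 ++ [x]) + cost q (x :: (l2 ++ [x])) := cost_append q l1 x (l2 ++ [x])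
    rw [cost_append q l1 x l3, e1, e2, e3]
    exact add_le_add_left le_self_add _



lemma shorten {lam : ℝ} {q : Fin m → E} {h k : Fin m} :
    ∀ (n : ℕ) (l : List (Fin m)), l.length ≤ n → Adm lam q h k l →
    ∃ l', Adm lam q h k l' ∧ l'.length ≤ m + 1 ∧ cost q l' ≤ cost q l := by
  intro n
  induction n with
  | zero =>
    intro l hn hl
    cases l with
    | nil => exact absurd rfl hl.1
    | cons a t => simp at hn
  | succ n IH =>
    intro l hn hl
    by_cases hlen : l.length ≤ m + 1
    · exact ⟨l, hl, hlen, le_rfl⟩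
    · obtain ⟨l'', hadm, hlt, hcost⟩ := shorten_step hl (by omega)
      obtain ⟨l', hadm', hlen', hcost'⟩ := IH l'' (by omega) hadm
      exact ⟨l', hadm', hlen', hcost'.trans hcost⟩

lemma exists_ofFn_eq {α : Type*} : ∀ (l : List α), l ≠ [] →
    ∃ (v : ℕ) (i : Fin (v + 1) → α), List.ofFn i = l := by
  intro l
  induction l with
  | nil => intro hl; exact absurd rfl hl
  | cons a t IH =>
    intro _
    cases t with
    | nil => exact ⟨0, fun _ => a, by simp⟩
    | cons b u =>
      obtain ⟨v, i, hi⟩ := IH (by simp)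
      exact ⟨v + 1, Fin.cons a i, by rw [List.ofFn_cons, hi]⟩

lemma head?_ofFn {α : Type*} {v : ℕ} (i : Fin (v + 1) → α) :
    (List.ofFn i).head? = some (i 0) := by
  rw [List.ofFn_succ]; rfl

lemma getLast?_ofFn {α : Type*} {v : ℕ} (i : Fin (v + 1) → α) :
    (List.ofFn i).getLast? = some (i (Fin.last v)) := by
  have hne : List.ofFn i ≠ [] := by simp
  rw [List.getLast?_eq_getLast hne, getLast_ofFn_succ]

lemma chain'_ofFn_iff {lam : ℝ} {q : Fin m → E} {v : ℕ} (i : Fin (v + 1) → Fin m) :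
    (List.ofFn i).Chain' (fun a b => ‖q b - q a‖ < lam) ↔
      ∀ j : Fin v, ‖q (i j.succ) - q (i j.castSucc)‖ < lam := by
  unfold List.Chain'; rw [List.isChain_ofFn]
  constructor
  · intro H j
    exact H j.1 (Nat.succ_lt_succ j.2)
  · intro H j hj
    exact H ⟨j, Nat.lt_of_succ_lt_succ hj⟩

def Cond (lam : ℝ) (q : Fin m → E) (h k : Fin m) {v : ℕ} (i : Fin (v + 1) → Fin m) : Prop :=
  i 0 = h ∧ i (Fin.last v) = k ∧ ∀ j : Fin v, ‖q (i j.succ) - q (i j.castSucc)‖ < lam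

open scoped Classical in
noncomputable def pcost (lam : ℝ) (q : Fin m → E) (h k : Fin m)
    (p : Σ v : Fin (m + 1), Fin (v.1 + 1) → Fin m) : ENNReal :=
  if Cond lam q h k p.2 then
    ∑ j : Fin p.1.1, ENNReal.ofReal ‖q (p.2 j.succ) - q (p.2 j.castSucc)‖
  else ⊤

lemma adm_ofFn_iff {lam : ℝ} {q : Fin m → E} {h k : Fin m} {v : ℕ}
    (i : Fin (v + 1) → Fin m) :
    Adm lam q h k (List.ofFn i) ↔ Cond lam q h k i := by
  unfold Adm Cond
  rw [head?_ofFn, getLast?_ofFn, chain'_ofFn_iff]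
  simp

lemma spDist_eq_iInf (lam : ℝ) (q : Fin m → E) (h k : Fin m) :
    spDist lam q h k = ⨅ p : Σ v : Fin (m + 1), Fin (v.1 + 1) → Fin m,
      pcost lam q h k p := by
  classical
  apply _root_.le_antisymm
  · apply le_iInf
    intro p
    by_cases hc : Cond lam q h k p.2
    · rw [pcost, if_pos hc]
      exact sInf_le ⟨p.1.1, p.2, hc.1, hc.2.1, hc.2.2, rfl⟩
    · rw [pcost, if_neg hc]; exact le_top
  · apply le_sInf
    rintro d ⟨v, i, h1, h2, h3, rfl⟩
    have hadm : Adm lam q h k (List.ofFn i) := (adm_ofFn_iff i).2 ⟨h1, h2, h3⟩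
    obtain ⟨l', hadm', hlen', hcost'⟩ :=
      shorten (List.ofFn i).length (List.ofFn i) le_rfl hadm
    obtain ⟨w, j, rfl⟩ := exists_ofFn_eq l' hadm'.1
    have hw : w < m + 1 := by
      have := hlen'
      rw [List.length_ofFn] at this
      omega
    have hcond : Cond lam q h k j := (adm_ofFn_iff j).1 hadm'
    calc (⨅ p : Σ v : Fin (m + 1), Fin (v.1 + 1) → Fin m, pcost lam q h k p)
        ≤ pcost lam q h k ⟨⟨w, hw⟩, j⟩ := iInf_le _ _
      _ = cost q (List.ofFn j) := by rw [pcost, if_pos hcond, cost_ofFn]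
      _ ≤ cost q (List.ofFn i) := hcost'
      _ = _ := cost_ofFn q v i

lemma tendsto_finset_inf {ι : Type*} (s : Finset ι) (f : ℕ → ι → ENNReal) (g : ι → ENNReal)
    (hf : ∀ p ∈ s, Tendsto (fun K => f K p) atTop (nhds (g p))) :
    Tendsto (fun K => s.inf (f K)) atTop (nhds (s.inf g)) := by
  induction s using Finset.cons_induction with
  | empty => simpa [Finset.inf_empty] using tendsto_const_nhds
  | cons a s ha IH =>
    simp only [Finset.inf_cons]
    have h1 := hf a (Finset.mem_cons_self a s)
    have h2 := IH fun p hp => hf p (Finset.mem_cons_of_mem hp)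
    exact h1.min h2

lemma iInf_eq_univ_inf {ι : Type*} [Fintype ι] (g : ι → ENNReal) :
    (⨅ p : ι, g p) = Finset.univ.inf g := by
  simp [Finset.inf_eq_iInf]

end SPAux

/-- Continuity of shortest-path distances: if no pairwise distance among
`q₁, …, q_m` equals the neighbourhood parameter `λ`, and `q⁽ᴷ⁾ᵢ → qᵢ` for each
`i`, then all pairwise `λ`-shortest-path distances converge. -/
theorem spDist_continuous {E : Type*} [NormedAddCommGroup E] [NormedSpace ℝ E]
    (m : ℕ) (lam : ℝ) (hlam : 0 < lam) (q : Fin m → E)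
    (hgen : ∀ h k : Fin m, ‖q h - q k‖ ≠ lam)
    (qK : ℕ → Fin m → E)
    (hconv : ∀ i : Fin m, Tendsto (fun K => qK K i) atTop (nhds (q i))) :
    ∀ h k : Fin m,
      Tendsto (fun K => spDist lam (qK K) h k) atTop (nhds (spDist lam q h k)) := by
  classical
  intro h k
  -- eventual stabilization of the edge set
  have hE : ∀ᶠ K in atTop, ∀ a b : Fin m,
      (‖qK K a - qK K b‖ < lam ↔ ‖q a - q b‖ < lam) := by
    rw [eventually_all]
    intro a
    rw [eventually_all]
    intro b
    have ht : Tendsto (fun K => ‖qK K a - qK K b‖) atTop (nhds ‖q a - q b‖) :=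
      ((hconv a).sub (hconv b)).norm
    rcases lt_or_gt_of_ne (hgen a b) with hlt | hgt
    · filter_upwards [ht.eventually_lt_const hlt] with K hK
      exact iff_of_true hK hlt
    · filter_upwards [ht.eventually_const_lt hgt] with K hK
      exact iff_of_false (not_lt.2 hK.le) (not_lt.2 hgt.le)
  simp only [SPAux.spDist_eq_iInf, SPAux.iInf_eq_univ_inf]
  apply SPAux.tendsto_finset_inf
  intro p _
  have hcost : Tendsto
      (fun K => ∑ j : Fin p.1.1,
        ENNReal.ofReal ‖qK K (p.2 j.succ) - qK K (p.2 j.castSucc)‖) atTop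
      (nhds (∑ j : Fin p.1.1, ENNReal.ofReal ‖q (p.2 j.succ) - q (p.2 j.castSucc)‖)) := by
    apply tendsto_finset_sum
    intro j _
    exact ENNReal.tendsto_ofReal (((hconv _).sub (hconv _)).norm)
  have hcond : ∀ᶠ K in atTop,
      (SPAux.Cond lam (qK K) h k p.2 ↔ SPAux.Cond lam q h k p.2) := by
    filter_upwards [hE] with K hK
    unfold SPAux.Cond
    refine and_congr_right fun _ => and_congr_right fun _ => forall_congr' fun j => hK _ _
  by_cases hc : SPAux.Cond lam q h k p.2
  · have heq : ∀ᶠ K in atTop, (fun K => ∑ j : Fin p.1.1,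
        ENNReal.ofReal ‖qK K (p.2 j.succ) - qK K (p.2 j.castSucc)‖) K
          = SPAux.pcost lam (qK K) h k p := by
      filter_upwards [hcond] with K hK
      exact (if_pos (hK.2 hc)).symm
    rw [show SPAux.pcost lam q h k p
        = ∑ j : Fin p.1.1, ENNReal.ofReal ‖q (p.2 j.succ) - q (p.2 j.castSucc)‖
      from if_pos hc]
    exact Tendsto.congr' heq hcost
  · have heq : ∀ᶠ K in atTop,
        (fun _ => (⊤ : ENNReal)) K = SPAux.pcost lam (qK K) h k p := by
      filter_upwards [hcond] with K hK
      exact (if_neg fun hc' => hc (hK.1 hc')).symm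
    rw [show SPAux.pcost lam q h k p = ⊤ from if_neg hc]
    exact Tendsto.congr' heq tendsto_const_nhds
end

section
/- Let s ≥ 2 and l ≥ s. Let y_1,…,y_s and t_1,…,t_l be real numbers with Σ_{k=1}^s (t_k − t̄_s)² ≠ 0, where t̄_s is the mean of t_1,…,t_s. For each K ∈ ℕ let z_1^{(K)},…,z_l^{(K)} be real numbers such that |z_h^{(K)} − z_k^{(K)}| → |t_h − t_k| as K → ∞ for all h, k ∈ {1,…,l}. Then for every r ∈ {1,…,l}, the predicted response computed from the z's converges to the predicted response computed from the t's: ŷ((z_1^{(K)},…,z_s^{(K)}), y; z_r^{(K)}) → ŷ((t_1,…,t_s), y; t_r) as K → ∞ (the regression denominators Σ_{k=1}^s (z_k^{(K)} − z̄^{(K)})² being nonzero for all sufficiently large K). -/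
open Filter

/-- Mean of `s` real numbers. -/
noncomputable def sampleMean (s : ℕ) (x : Fin s → ℝ) : ℝ := (∑ k, x k) / s

/-- Least-squares slope for simple linear regression of `y` on `x`. -/
noncomputable def lsSlope (s : ℕ) (x y : Fin s → ℝ) : ℝ :=
  (∑ k, (y k - sampleMean s y) * (x k - sampleMean s x)) /
    (∑ k, (x k - sampleMean s x) ^ 2)

/-- Least-squares intercept for simple linear regression of `y` on `x`. -/
noncomputable def lsIntercept (s : ℕ) (x y : Fin s → ℝ) : ℝ :=
  sampleMean s y - lsSlope s x y * sampleMean s x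

/-- Least-squares predicted response at the point `u`. -/
noncomputable def lsPred (s : ℕ) (x y : Fin s → ℝ) (u : ℝ) : ℝ :=
  lsIntercept s x y + lsSlope s x y * u

lemma sub_sampleMean_eq (s : ℕ) (hs : (s : ℝ) ≠ 0) (x : Fin s → ℝ) (u : ℝ) :
    u - sampleMean s x = (∑ j, (u - x j)) / (s : ℝ) := by
  rw [sampleMean, eq_div_iff hs, Finset.sum_sub_distrib, Finset.sum_const,
    Finset.card_univ, Fintype.card_fin, nsmul_eq_mul]
  field_simp

lemma lsPred_eq (s : ℕ) (x y : Fin s → ℝ) (u : ℝ) :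
    lsPred s x y u = sampleMean s y +
      (∑ k, (y k - sampleMean s y) * ((x k - sampleMean s x) * (u - sampleMean s x))) /
        (∑ k, (x k - sampleMean s x) ^ 2) := by
  have h : ∑ k, (y k - sampleMean s y) * ((x k - sampleMean s x) * (u - sampleMean s x))
      = (∑ k, (y k - sampleMean s y) * (x k - sampleMean s x)) * (u - sampleMean s x) := by
    rw [Finset.sum_mul]; exact Finset.sum_congr rfl (fun k _ => by ring)
  rw [lsPred, lsIntercept, lsSlope, h]
  ring

/-- Deterministic heart of Theorem 4: if all pairwise distances of the proxy
regressors `z⁽ᴷ⁾₁, …, z⁽ᴷ⁾_l` converge to the pairwise distances of the true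
regressors `t₁, …, t_l`, then (the regression denominators being eventually
nonzero) the response predicted from the first `s` proxies at `z⁽ᴷ⁾_r` converges
to the response predicted from the first `s` true regressors at `t_r`. -/
theorem pred_from_proxy_regressors_consistent
    (s l : ℕ) (hs : 2 ≤ s) (hl : s ≤ l)
    (y : Fin s → ℝ) (t : Fin l → ℝ)
    (ht : ∑ k : Fin s, (t (Fin.castLE hl k) -
      sampleMean s (fun k => t (Fin.castLE hl k))) ^ 2 ≠ 0)
    (z : ℕ → Fin l → ℝ)
    (hconv : ∀ h k : Fin l,
      Tendsto (fun K => |z K h - z K k|) atTop (nhds |t h - t k|)) :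
    (∀ᶠ K in atTop,
      ∑ k : Fin s, (z K (Fin.castLE hl k) -
        sampleMean s (fun k => z K (Fin.castLE hl k))) ^ 2 ≠ 0) ∧
    ∀ r : Fin l,
      Tendsto (fun K => lsPred s (fun k => z K (Fin.castLE hl k)) y (z K r))
        atTop (nhds (lsPred s (fun k => t (Fin.castLE hl k)) y (t r))) := by
  have hs0 : (s : ℝ) ≠ 0 := Nat.cast_ne_zero.mpr (by omega)
  set c : Fin s → Fin l := Fin.castLE hl with hc
  -- squared differences converge
  have hsq : ∀ a b : Fin l, Tendsto (fun K => (z K a - z K b) ^ 2) atTop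
      (nhds ((t a - t b) ^ 2)) := by
    intro a b
    have h := (hconv a b).mul (hconv a b)
    simpa [abs_mul_abs_self, sq] using h
  -- products of differences converge (polarization)
  have hP : ∀ a b p q : Fin l, Tendsto (fun K => (z K a - z K b) * (z K p - z K q)) atTop
      (nhds ((t a - t b) * (t p - t q))) := by
    intro a b p q
    have h := ((((hsq a q).add (hsq b p)).sub (hsq a p)).sub (hsq b q)).div_const 2
    have e1 : (fun K => (z K a - z K b) * (z K p - z K q)) =
        fun K => ((z K a - z K q) ^ 2 + (z K b - z K p) ^ 2 - (z K a - z K p) ^ 2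
          - (z K b - z K q) ^ 2) / 2 := by
      funext K; ring
    have e2 : (t a - t b) * (t p - t q) =
        ((t a - t q) ^ 2 + (t b - t p) ^ 2 - (t a - t p) ^ 2 - (t b - t q) ^ 2) / 2 := by
      ring
    rw [e1, e2]
    exact h
  -- centered products converge
  have hQ : ∀ (k : Fin s) (r : Fin l),
      Tendsto (fun K => (z K (c k) - sampleMean s (fun j => z K (c j))) *
          (z K r - sampleMean s (fun j => z K (c j)))) atTop
        (nhds ((t (c k) - sampleMean s (fun j => t (c j))) *
          (t r - sampleMean s (fun j => t (c j))))) := by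
    intro k r
    have key : ∀ x : Fin l → ℝ,
        (x (c k) - sampleMean s (fun j => x (c j))) *
          (x r - sampleMean s (fun j => x (c j)))
        = (∑ j : Fin s, ∑ j' : Fin s, (x (c k) - x (c j)) * (x r - x (c j')))
            / ((s : ℝ) * s) := by
      intro x
      rw [sub_sampleMean_eq s hs0 (fun j => x (c j)) (x (c k)),
        sub_sampleMean_eq s hs0 (fun j => x (c j)) (x r),
        div_mul_div_comm, Finset.sum_mul_sum]
    simp only [key]
    exact (tendsto_finset_sum _ (fun j _ => tendsto_finset_sum _
      (fun j' _ => hP (c k) (c j) r (c j')))).div_const _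
  -- denominator converges
  have hD : Tendsto (fun K => ∑ k : Fin s,
        (z K (c k) - sampleMean s (fun j => z K (c j))) ^ 2) atTop
      (nhds (∑ k : Fin s, (t (c k) - sampleMean s (fun j => t (c j))) ^ 2)) := by
    simp only [sq]
    exact tendsto_finset_sum _ (fun k _ => hQ k (c k))
  refine ⟨hD.eventually_ne ht, fun r => ?_⟩
  have hN : Tendsto (fun K => ∑ k : Fin s, (y k - sampleMean s y) *
        ((z K (c k) - sampleMean s (fun j => z K (c j))) *
          (z K r - sampleMean s (fun j => z K (c j))))) atTop
      (nhds (∑ k : Fin s, (y k - sampleMean s y) *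
        ((t (c k) - sampleMean s (fun j => t (c j))) *
          (t r - sampleMean s (fun j => t (c j)))))) :=
    tendsto_finset_sum _ (fun k _ => (hQ k r).const_mul _)
  simp only [lsPred_eq]
  exact tendsto_const_nhds.add (hN.div hD ht)
end

section
/- Let l ∈ ℕ, let Δ⁽⁰⁾ ∈ ℝ^{l×l} and let (Δ⁽ᴷ⁾)_{K∈ℕ} be a sequence of matrices in ℝ^{l×l} with ‖Δ⁽ᴷ⁾ − Δ⁽⁰⁾‖_F → 0 as K → ∞. Suppose that for every K, D⁽ᴷ⁾ ∈ Min(Δ⁽ᴷ⁾). Then the sequence (D⁽ᴷ⁾)_{K∈ℕ} has an accumulation point D⁽⁰⁾ (i.e., some subsequence D⁽ᴷ_j⁾ converges to D⁽⁰⁾ in Frobenius norm) such that D⁽⁰⁾ ∈ Min(Δ⁽⁰⁾). -/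
open Filter

/-- The set of `l × l` EDM-1 matrices of embedding dimension at most one:
matrices of pairwise distances of `l` points on the real line. -/
def EDM1 (l : ℕ) : Set (Matrix (Fin l) (Fin l) ℝ) :=
  { D | ∃ z : Fin l → ℝ, ∀ i j, D i j = |z i - z j| }

/-- The Frobenius norm of a real matrix. -/
noncomputable def frobNorm {l : ℕ} (M : Matrix (Fin l) (Fin l) ℝ) : ℝ :=
  Real.sqrt (∑ i, ∑ j, (M i j) ^ 2)

/-- The set of globally minimizing EDM-1 matrices for the dissimilarity matrix
`Δ`: the EDM-1 matrices closest to `Δ` in Frobenius norm (the raw-stress global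
minimizers with unit weights). -/
noncomputable def MinSet (l : ℕ) (Δ : Matrix (Fin l) (Fin l) ℝ) :
    Set (Matrix (Fin l) (Fin l) ℝ) :=
  { D ∈ EDM1 l | frobNorm (D - Δ) = ⨅ D' : EDM1 l, frobNorm ((D' : Matrix (Fin l) (Fin l) ℝ) - Δ) }

/-! ### Auxiliary material -/

/-- Linear homeomorphism sending a matrix to the corresponding point of
Euclidean space, so that the Frobenius norm becomes the Euclidean norm. -/
noncomputable def matE (l : ℕ) : Matrix (Fin l) (Fin l) ℝ ≃L[ℝ] EuclideanSpace ℝ (Fin l × Fin l) :=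
  LinearEquiv.toContinuousLinearEquiv <|
    (LinearEquiv.curry ℝ ℝ (Fin l) (Fin l)).symm.trans (WithLp.linearEquiv 2 ℝ _).symm

lemma matE_apply {l : ℕ} (M : Matrix (Fin l) (Fin l) ℝ) (p : Fin l × Fin l) :
    matE l M p = M p.1 p.2 := rfl

lemma frobNorm_eq {l : ℕ} (M : Matrix (Fin l) (Fin l) ℝ) :
    frobNorm M = ‖matE l M‖ := by
  rw [EuclideanSpace.norm_eq, frobNorm]
  congr 1
  rw [Fintype.sum_prod_type]
  simp [matE_apply, Real.norm_eq_abs, sq_abs]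

lemma frobNorm_nonneg {l : ℕ} (M : Matrix (Fin l) (Fin l) ℝ) : 0 ≤ frobNorm M := by
  rw [frobNorm_eq]; exact norm_nonneg _

lemma frobNorm_add_le {l : ℕ} (A B : Matrix (Fin l) (Fin l) ℝ) :
    frobNorm (A + B) ≤ frobNorm A + frobNorm B := by
  simp only [frobNorm_eq, map_add]
  exact norm_add_le _ _

lemma frobNorm_neg {l : ℕ} (A : Matrix (Fin l) (Fin l) ℝ) : frobNorm (-A) = frobNorm A := by
  simp only [frobNorm_eq, map_neg, norm_neg]

lemma frobNorm_sub_rev {l : ℕ} (A B : Matrix (Fin l) (Fin l) ℝ) :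
    frobNorm (A - B) = frobNorm (B - A) := by
  rw [← frobNorm_neg (A - B), neg_sub]

lemma zero_mem_EDM1 (l : ℕ) : (0 : Matrix (Fin l) (Fin l) ℝ) ∈ EDM1 l :=
  ⟨fun _ => 0, fun i j => by simp [Matrix.zero_apply]⟩

instance EDM1.nonempty (l : ℕ) : Nonempty (EDM1 l) := ⟨⟨0, zero_mem_EDM1 l⟩⟩

lemma stress_bddBelow (l : ℕ) (Δ : Matrix (Fin l) (Fin l) ℝ) :
    BddBelow (Set.range fun D' : EDM1 l => frobNorm ((D' : Matrix (Fin l) (Fin l) ℝ) - Δ)) := by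
  refine ⟨0, ?_⟩
  rintro x ⟨D', rfl⟩
  exact frobNorm_nonneg _

/-- One-sided Lipschitz estimate for the optimal stress value. -/
lemma stressInf_le (l : ℕ) (Δ₁ Δ₂ : Matrix (Fin l) (Fin l) ℝ) :
    (⨅ D' : EDM1 l, frobNorm ((D' : Matrix (Fin l) (Fin l) ℝ) - Δ₁)) ≤
      (⨅ D' : EDM1 l, frobNorm ((D' : Matrix (Fin l) (Fin l) ℝ) - Δ₂)) + frobNorm (Δ₂ - Δ₁) := by
  rw [← sub_le_iff_le_add]
  refine le_ciInf fun D' => ?_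
  rw [sub_le_iff_le_add]
  calc (⨅ D' : EDM1 l, frobNorm ((D' : Matrix (Fin l) (Fin l) ℝ) - Δ₁))
      ≤ frobNorm ((D' : Matrix (Fin l) (Fin l) ℝ) - Δ₁) := ciInf_le (stress_bddBelow l Δ₁) D'
    _ ≤ frobNorm ((D' : Matrix (Fin l) (Fin l) ℝ) - Δ₂) + frobNorm (Δ₂ - Δ₁) := by
        have : (D' : Matrix (Fin l) (Fin l) ℝ) - Δ₁ =
            ((D' : Matrix (Fin l) (Fin l) ℝ) - Δ₂) + (Δ₂ - Δ₁) := by abel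
        rw [this]; exact frobNorm_add_le _ _

lemma abs_stressInf_sub_le (l : ℕ) (Δ₁ Δ₂ : Matrix (Fin l) (Fin l) ℝ) :
    |(⨅ D' : EDM1 l, frobNorm ((D' : Matrix (Fin l) (Fin l) ℝ) - Δ₁)) -
      (⨅ D' : EDM1 l, frobNorm ((D' : Matrix (Fin l) (Fin l) ℝ) - Δ₂))| ≤ frobNorm (Δ₂ - Δ₁) := by
  have h1 := stressInf_le l Δ₁ Δ₂
  have h2 := stressInf_le l Δ₂ Δ₁
  rw [frobNorm_sub_rev] at h2
  rw [abs_sub_le_iff]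
  constructor <;> linarith

/-- Each coordinate is bounded by the Euclidean norm. -/
lemma abs_coord_le_norm {ι : Type*} [Fintype ι] (x : EuclideanSpace ℝ ι) (p : ι) :
    |x p| ≤ ‖x‖ := by
  rw [EuclideanSpace.norm_eq, ← Real.sqrt_sq_eq_abs]
  apply Real.sqrt_le_sqrt
  have : (x p) ^ 2 = ‖x p‖ ^ 2 := by rw [Real.norm_eq_abs, sq_abs]
  rw [this]
  exact Finset.single_le_sum (f := fun i => ‖x i‖ ^ 2)
    (fun i _ => sq_nonneg _) (Finset.mem_univ p)

/-- The set of EDM-1 matrices is closed. -/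
lemma isClosed_EDM1 (l : ℕ) : IsClosed (EDM1 l) := by
  rcases Nat.eq_zero_or_pos l with hl | hl
  · subst hl
    have : EDM1 0 = Set.univ := by
      ext M
      simp only [Set.mem_univ, iff_true]
      exact ⟨fun _ => 0, fun i => i.elim0⟩
    rw [this]; exact isClosed_univ
  · haveI : SequentialSpace (Matrix (Fin l) (Fin l) ℝ) :=
      inferInstanceAs (SequentialSpace (Fin l → Fin l → ℝ))
    apply IsSeqClosed.isClosed
    intro Dn D₀ hmem hconv
    -- entrywise convergence
    have hentry : ∀ i j, Tendsto (fun n => Dn n i j) atTop (nhds (D₀ i j)) := by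
      intro i j
      have h1 : Tendsto (fun n => matE l (Dn n)) atTop (nhds (matE l D₀)) :=
        ((matE l).continuous.tendsto _).comp hconv
      have h2 : Continuous fun x : EuclideanSpace ℝ (Fin l × Fin l) => x (i, j) :=
        (EuclideanSpace.proj ((i, j) : Fin l × Fin l)).continuous
      exact (h2.tendsto _).comp h1
    classical
    choose w hw using hmem
    set i0 : Fin l := ⟨0, hl⟩
    set z : ℕ → Fin l → ℝ := fun n i => w n i - w n i0 with hz
    have hzD : ∀ n i j, Dn n i j = |z n i - z n j| := by
      intro n i j
      rw [hw n i j]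
      simp only [hz]
      congr 1
      ring
    -- boundedness of z
    have hnormconv : Tendsto (fun n => ‖matE l (Dn n)‖) atTop (nhds ‖matE l D₀‖) :=
      (((matE l).continuous.tendsto _).comp hconv).norm
    obtain ⟨C, hC⟩ := hnormconv.bddAbove_range
    have hzbd : ∀ n, z n ∈ Metric.closedBall (0 : Fin l → ℝ) C := by
      intro n
      rw [Metric.mem_closedBall, dist_zero_right]
      have hC0 : (0:ℝ) ≤ C := le_trans (norm_nonneg _) (hC ⟨n, rfl⟩)
      rw [pi_norm_le_iff_of_nonneg hC0]
      intro i
      have : |z n i| = Dn n i i0 := by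
        rw [hzD n i i0]; simp [hz]
      rw [Real.norm_eq_abs, this]
      calc Dn n i i0 ≤ |Dn n i i0| := le_abs_self _
        _ = |matE l (Dn n) (i, i0)| := rfl
        _ ≤ ‖matE l (Dn n)‖ := abs_coord_le_norm _ _
        _ ≤ C := hC ⟨n, rfl⟩
    obtain ⟨ζ, -, ψ, hψ, hζ⟩ :=
      (isCompact_closedBall (0 : Fin l → ℝ) C).tendsto_subseq hzbd
    refine ⟨ζ, fun i j => ?_⟩
    have h1 : Tendsto (fun n => Dn (ψ n) i j) atTop (nhds (D₀ i j)) :=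
      (hentry i j).comp hψ.tendsto_atTop
    have h2 : Tendsto (fun n => Dn (ψ n) i j) atTop (nhds (|ζ i - ζ j|)) := by
      have hζi : Tendsto (fun n => z (ψ n) i) atTop (nhds (ζ i)) :=
        ((continuous_apply i).tendsto _).comp hζ
      have hζj : Tendsto (fun n => z (ψ n) j) atTop (nhds (ζ j)) :=
        ((continuous_apply j).tendsto _).comp hζ
      have := (hζi.sub hζj).abs
      simpa only [hzD] using this
    exact tendsto_nhds_unique h1 h2

/-- Continuity theorem for raw-stress embeddings (Theorem 3): if `Δ⁽ᴷ⁾ → Δ⁽⁰⁾`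
in Frobenius norm and `D⁽ᴷ⁾ ∈ Min(Δ⁽ᴷ⁾)` for each `K`, then `(D⁽ᴷ⁾)` has an
accumulation point lying in `Min(Δ⁽⁰⁾)`. -/
theorem rawStress_minimizers_accumulate
    (l : ℕ) (Δ₀ : Matrix (Fin l) (Fin l) ℝ)
    (Δ : ℕ → Matrix (Fin l) (Fin l) ℝ)
    (hΔ : Tendsto (fun K => frobNorm (Δ K - Δ₀)) atTop (nhds 0))
    (D : ℕ → Matrix (Fin l) (Fin l) ℝ)
    (hD : ∀ K, D K ∈ MinSet l (Δ K)) :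
    ∃ (D₀ : Matrix (Fin l) (Fin l) ℝ) (φ : ℕ → ℕ), StrictMono φ ∧
      Tendsto (fun j => frobNorm (D (φ j) - D₀)) atTop (nhds 0) ∧
      D₀ ∈ MinSet l Δ₀ := by
  -- convergence of Δ in Euclidean space
  have hΔE : Tendsto (fun K => matE l (Δ K)) atTop (nhds (matE l Δ₀)) := by
    rw [tendsto_iff_norm_sub_tendsto_zero]
    have : ∀ K, ‖matE l (Δ K) - matE l Δ₀‖ = frobNorm (Δ K - Δ₀) := by
      intro K; rw [frobNorm_eq, map_sub]
    simpa only [this] using hΔ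
  -- boundedness of frobNorm (Δ K)
  obtain ⟨c, hc⟩ := hΔ.bddAbove_range
  have hΔbd : ∀ K, frobNorm (Δ K) ≤ frobNorm Δ₀ + c := by
    intro K
    have h1 : Δ K = (Δ K - Δ₀) + Δ₀ := by abel
    calc frobNorm (Δ K) ≤ frobNorm (Δ K - Δ₀) + frobNorm Δ₀ := by
          nth_rewrite 1 [h1]; exact frobNorm_add_le _ _
      _ ≤ c + frobNorm Δ₀ := by
          have := hc ⟨K, rfl⟩
          linarith
      _ = frobNorm Δ₀ + c := by ring
  -- minimizer property and boundedness of D K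
  have hDmin : ∀ K, frobNorm (D K - Δ K) =
      ⨅ D' : EDM1 l, frobNorm ((D' : Matrix (Fin l) (Fin l) ℝ) - Δ K) := fun K => (hD K).2
  have hDEDM : ∀ K, D K ∈ EDM1 l := fun K => (hD K).1
  have hstress_le : ∀ K, frobNorm (D K - Δ K) ≤ frobNorm (Δ K) := by
    intro K
    rw [hDmin K]
    have := ciInf_le (stress_bddBelow l (Δ K)) (⟨0, zero_mem_EDM1 l⟩ : EDM1 l)
    simpa [zero_sub, frobNorm_neg] using this
  set R : ℝ := 2 * (frobNorm Δ₀ + c) with hR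
  have hDbd : ∀ K, ‖matE l (D K)‖ ≤ R := by
    intro K
    rw [← frobNorm_eq]
    have h1 : D K = (D K - Δ K) + Δ K := by abel
    calc frobNorm (D K) ≤ frobNorm (D K - Δ K) + frobNorm (Δ K) := by
          nth_rewrite 1 [h1]; exact frobNorm_add_le _ _
      _ ≤ frobNorm (Δ K) + frobNorm (Δ K) := by linarith [hstress_le K]
      _ ≤ R := by rw [hR]; linarith [hΔbd K]
  -- extract convergent subsequence in Euclidean space
  have hball : ∀ K, matE l (D K) ∈ Metric.closedBall (0 : EuclideanSpace ℝ (Fin l × Fin l)) R := by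
    intro K; rw [Metric.mem_closedBall, dist_zero_right]; exact hDbd K
  obtain ⟨x, -, φ, hφ, hx⟩ := (isCompact_closedBall
    (0 : EuclideanSpace ℝ (Fin l × Fin l)) R).tendsto_subseq hball
  set D₀ : Matrix (Fin l) (Fin l) ℝ := (matE l).symm x with hD₀
  have hxD₀ : matE l D₀ = x := (matE l).apply_symm_apply x
  -- convergence D (φ j) → D₀
  have hDconv : Tendsto (fun j => D (φ j)) atTop (nhds D₀) := by
    have := ((matE l).symm.continuous.tendsto x).comp hx
    simpa [Function.comp_def, hD₀] using this
  have hfrobconv : Tendsto (fun j => frobNorm (D (φ j) - D₀)) atTop (nhds 0) := by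
    have h1 : Tendsto (fun j => matE l (D (φ j))) atTop (nhds (matE l D₀)) := by
      rw [hxD₀]; exact hx
    rw [tendsto_iff_norm_sub_tendsto_zero] at h1
    have : ∀ j, ‖matE l (D (φ j)) - matE l D₀‖ = frobNorm (D (φ j) - D₀) := by
      intro j; rw [frobNorm_eq, map_sub]
    simpa only [this] using h1
  refine ⟨D₀, φ, hφ, hfrobconv, ?_, ?_⟩
  · -- D₀ ∈ EDM1 l
    exact (isClosed_EDM1 l).mem_of_tendsto hDconv
      (Eventually.of_forall fun j => hDEDM (φ j))
  · -- D₀ realizes the infimum for Δ₀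
    -- the optimal stress value converges
    have hinfconv : Tendsto
        (fun K => ⨅ D' : EDM1 l, frobNorm ((D' : Matrix (Fin l) (Fin l) ℝ) - Δ K)) atTop
        (nhds (⨅ D' : EDM1 l, frobNorm ((D' : Matrix (Fin l) (Fin l) ℝ) - Δ₀))) := by
      rw [tendsto_iff_norm_sub_tendsto_zero]
      refine squeeze_zero_norm (fun K => ?_) hΔ
      have h := abs_stressInf_sub_le l (Δ K) Δ₀
      rw [frobNorm_sub_rev] at h
      rw [norm_norm, Real.norm_eq_abs]
      exact h
    -- LHS of the minimizer property converges to frobNorm (D₀ - Δ₀)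
    have hlhs : Tendsto (fun j => frobNorm (D (φ j) - Δ (φ j))) atTop
        (nhds (frobNorm (D₀ - Δ₀))) := by
      have h1 : Tendsto (fun j => matE l (D (φ j))) atTop (nhds (matE l D₀)) := by
        rw [hxD₀]; exact hx
      have h2 : Tendsto (fun j => matE l (Δ (φ j))) atTop (nhds (matE l Δ₀)) :=
        hΔE.comp hφ.tendsto_atTop
      have h3 := (h1.sub h2).norm
      have heq : ∀ j, ‖matE l (D (φ j)) - matE l (Δ (φ j))‖ = frobNorm (D (φ j) - Δ (φ j)) := by
        intro j; rw [frobNorm_eq, map_sub]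
      have heq0 : ‖matE l D₀ - matE l Δ₀‖ = frobNorm (D₀ - Δ₀) := by
        rw [frobNorm_eq, map_sub]
      rw [heq0] at h3
      simpa only [heq] using h3
    have hrhs : Tendsto (fun j => ⨅ D' : EDM1 l,
        frobNorm ((D' : Matrix (Fin l) (Fin l) ℝ) - Δ (φ j))) atTop
        (nhds (⨅ D' : EDM1 l, frobNorm ((D' : Matrix (Fin l) (Fin l) ℝ) - Δ₀))) :=
      hinfconv.comp hφ.tendsto_atTop
    have : (fun j => frobNorm (D (φ j) - Δ (φ j))) =
        fun j => ⨅ D' : EDM1 l, frobNorm ((D' : Matrix (Fin l) (Fin l) ℝ) - Δ (φ j)) := by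
      funext j; exact hDmin (φ j)
    rw [this] at hlhs
    exact tendsto_nhds_unique hlhs hrhs
end

section
/- Let l ∈ ℕ and let Δ ∈ ℝ^{l×l} be any matrix. Then there exists D ∈ 𝒴_l attaining the infimum inf_{D′ ∈ 𝒴_l} ‖D′ − Δ‖_F; that is, the set Min(Δ) of globally minimizing EDM-1 matrices for Δ is nonempty. -/
lemma abs_entry_le_frobNorm {l : ℕ} (M : Matrix (Fin l) (Fin l) ℝ) (i j : Fin l) :
    |M i j| ≤ frobNorm M := by
  rw [← Real.sqrt_sq_eq_abs]
  apply Real.sqrt_le_sqrt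
  calc (M i j) ^ 2 ≤ ∑ j', (M i j') ^ 2 :=
        Finset.single_le_sum (f := fun j' => (M i j') ^ 2) (fun _ _ => sq_nonneg _) (Finset.mem_univ j)
    _ ≤ ∑ i', ∑ j', (M i' j') ^ 2 :=
        Finset.single_le_sum (f := fun i' => ∑ j', (M i' j') ^ 2)
          (fun _ _ => Finset.sum_nonneg fun _ _ => sq_nonneg _) (Finset.mem_univ i)

/-- Existence of raw-stress minimizers: for any matrix `Δ ∈ ℝ^{l×l}` there is an
EDM-1 matrix attaining the infimum of the Frobenius distance to `Δ` over `𝒴_l`;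
i.e. `Min(Δ)` is nonempty. -/
theorem MinSet_nonempty (l : ℕ) (Δ : Matrix (Fin l) (Fin l) ℝ) :
    (MinSet l Δ).Nonempty := by
  classical
  set Dz : (Fin l → ℝ) → Matrix (Fin l) (Fin l) ℝ := fun z i j => |z i - z j| with hDz
  have hDzmem : ∀ z, Dz z ∈ EDM1 l := fun z => ⟨z, fun i j => rfl⟩
  haveI : Nonempty (EDM1 l) := ⟨⟨Dz 0, hDzmem 0⟩⟩
  have hbdd : BddBelow (Set.range fun D' : EDM1 l =>
      frobNorm ((D' : Matrix (Fin l) (Fin l) ℝ) - Δ)) := by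
    refine ⟨0, ?_⟩
    rintro x ⟨D', rfl⟩
    exact Real.sqrt_nonneg _
  by_cases hl : l = 0
  · subst hl
    have hz : ∀ M : Matrix (Fin 0) (Fin 0) ℝ, frobNorm M = 0 := by
      intro M; simp [frobNorm]
    refine ⟨Dz 0, hDzmem 0, ?_⟩
    have : (⨅ D' : EDM1 0, frobNorm ((D' : Matrix (Fin 0) (Fin 0) ℝ) - Δ)) = 0 := by
      simp only [hz]; exact ciInf_const
    rw [this, hz]
  · have hlpos : 0 < l := Nat.pos_of_ne_zero hl
    set i₀ : Fin l := ⟨0, hlpos⟩ with hi₀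
    set f : (Fin l → ℝ) → ℝ := fun z => frobNorm (Dz z - Δ) with hf
    have hfc : Continuous f := by
      apply Real.continuous_sqrt.comp
      apply continuous_finset_sum; intro i _
      apply continuous_finset_sum; intro j _
      exact (((continuous_apply i).sub (continuous_apply j)).abs.sub continuous_const).pow 2
    have hf0 : f 0 = frobNorm Δ := by
      simp [hf, frobNorm, hDz, Matrix.sub_apply]
      congr 1
      refine Finset.sum_congr rfl fun i _ => Finset.sum_congr rfl fun j _ => ?_
      show (0 - Δ i j) ^ 2 = _
      ring
    have htrans : ∀ (z : Fin l → ℝ) (c : ℝ), Dz (fun i => z i - c) = Dz z := by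
      intro z c
      funext i j
      show |(z i - c) - (z j - c)| = |z i - z j|
      ring_nf
    set R : ℝ := 2 * frobNorm Δ with hR
    have hRnonneg : 0 ≤ R := mul_nonneg (by norm_num) (Real.sqrt_nonneg _)
    set K : Set (Fin l → ℝ) := Set.pi Set.univ (fun _ => Set.Icc (-R) R) with hK
    have hKc : IsCompact K := isCompact_univ_pi fun _ => isCompact_Icc
    have hK0 : (0 : Fin l → ℝ) ∈ K := by
      intro i _
      constructor
      · simpa using hRnonneg
      · exact hRnonneg
    have hKmem : ∀ z : Fin l → ℝ, f z ≤ frobNorm Δ → (fun i => z i - z i₀) ∈ K := by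
      intro z hfz i _
      have h1 : |z i - z i₀| = Dz z i i₀ := rfl
      have h2 : Dz z i i₀ = (Dz z - Δ) i i₀ + Δ i i₀ := by simp [Matrix.sub_apply]
      have h3 : |z i - z i₀| ≤ |(Dz z - Δ) i i₀| + |Δ i i₀| := by
        rw [h1, h2]
        exact add_le_add (le_abs_self _) (le_abs_self _)
      have ha := abs_entry_le_frobNorm (Dz z - Δ) i i₀
      have hb := abs_entry_le_frobNorm Δ i i₀
      have hfz' : frobNorm (Dz z - Δ) ≤ frobNorm Δ := hfz
      have h4 : |z i - z i₀| ≤ R := by rw [hR]; linarith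
      exact Set.mem_Icc.mpr (abs_le.mp h4)
    obtain ⟨zs, hzsK, hmin⟩ := hKc.exists_isMinOn ⟨0, hK0⟩ hfc.continuousOn
    refine ⟨Dz zs, hDzmem zs, ?_⟩
    refine le_antisymm ?_ ?_
    · refine le_ciInf ?_
      rintro ⟨D, z, hzD⟩
      have hDeq : D = Dz z := by funext i j; exact hzD i j
      subst hDeq
      show f zs ≤ f z
      by_cases hc : f z ≤ frobNorm Δ
      · have hmem := hKmem z hc
        have h5 : f (fun i => z i - z i₀) = f z := by simp only [hf]; rw [htrans]
        exact (isMinOn_iff.mp hmin _ hmem).trans h5.le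
      · have h1 : f zs ≤ f 0 := isMinOn_iff.mp hmin _ hK0
        rw [hf0] at h1
        exact h1.trans (le_of_not_ge hc)
    · exact ciInf_le hbdd ⟨Dz zs, hDzmem zs⟩
end

section
/- Let L > 0, let D ∈ ℕ, and let ψ : [0, L] → ℝ^D satisfy ‖ψ(s) − ψ(t)‖ = |s − t| for all s, t ∈ [0, L] (an arclength-parameterized isometric embedding of the segment). Let λ > 0 and let t_1, …, t_m ∈ [0, L] be such that for every u ∈ [0, L] there exists i ∈ {1,…,m} with |u − t_i| < λ/2. Set q_i = ψ(t_i) for each i. Then for all h, k ∈ {1,…,m}, the λ-shortest-path distance recovers the geodesic distance exactly: d_{m,λ}(q; h, k) = |t_h − t_k|, and this infimum is attained by a path whose indices traverse the sample points in monotone order of their parameters. -/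
/-- telescoping sum over Fin -/
lemma fin_telescope : ∀ (v : ℕ) (g : Fin (v + 1) → ℝ),
    (∑ j : Fin v, (g j.succ - g j.castSucc)) = g (Fin.last v) - g 0 := by
  intro v
  induction v with
  | zero => intro g; simp
  | succ v ih =>
    intro g
    rw [Fin.sum_univ_castSucc]
    have h1 : ∀ j : Fin v, g j.castSucc.succ - g j.castSucc.castSucc
        = (fun x : Fin (v+1) => g x.castSucc) j.succ - (fun x : Fin (v+1) => g x.castSucc) j.castSucc := by
      intro j; rfl
    calc (∑ j : Fin v, (g j.castSucc.succ - g j.castSucc.castSucc))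
          + (g (Fin.last v).succ - g (Fin.last v).castSucc)
        = (∑ j : Fin v, ((fun x : Fin (v+1) => g x.castSucc) j.succ
            - (fun x : Fin (v+1) => g x.castSucc) j.castSucc))
          + (g (Fin.last v).succ - g (Fin.last v).castSucc) := by
          rw [Finset.sum_congr rfl (fun j _ => h1 j)]
      _ = (g (Fin.last v).castSucc - g ((0 : Fin (v+1)).castSucc))
          + (g (Fin.last v).succ - g (Fin.last v).castSucc) := by
          rw [ih (fun x : Fin (v+1) => g x.castSucc)]
      _ = g (Fin.last (v+1)) - g 0 := by
          rw [Fin.succ_last, Fin.castSucc_zero]; ring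

/-- Exact geodesic recovery on a flat one-dimensional manifold: if
`ψ : [0, L] → ℝ^D` is an arclength-parameterized isometric embedding of a
segment and the sample parameters `t₁, …, t_m` form a `λ/2`-net of `[0, L]`,
then the `λ`-shortest-path distance between the sample points `qᵢ = ψ(tᵢ)`
equals the geodesic distance `|t_h − t_k|`, attained by a path traversing the
sample points in monotone order of their parameters. -/
theorem spDist_exact_on_segment
    (L : ℝ) (hL : 0 < L) (D : ℕ)
    (ψ : ℝ → EuclideanSpace ℝ (Fin D))
    (hψ : ∀ s ∈ Set.Icc (0 : ℝ) L, ∀ t ∈ Set.Icc (0 : ℝ) L,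
      ‖ψ s - ψ t‖ = |s - t|)
    (lam : ℝ) (hlam : 0 < lam)
    (m : ℕ) (t : Fin m → ℝ) (ht : ∀ i, t i ∈ Set.Icc (0 : ℝ) L)
    (hnet : ∀ u ∈ Set.Icc (0 : ℝ) L, ∃ i : Fin m, |u - t i| < lam / 2)
    (q : Fin m → EuclideanSpace ℝ (Fin D)) (hq : ∀ i, q i = ψ (t i)) :
    ∀ h k : Fin m,
      spDist lam q h k = ENNReal.ofReal |t h - t k| ∧
      ∃ (v : ℕ) (i : Fin (v + 1) → Fin m),
        i 0 = h ∧ i (Fin.last v) = k ∧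
        (∀ j : Fin v, ‖q (i j.succ) - q (i j.castSucc)‖ < lam) ∧
        (∑ j : Fin v, ENNReal.ofReal ‖q (i j.succ) - q (i j.castSucc)‖
          = ENNReal.ofReal |t h - t k|) ∧
        (Monotone (fun j => t (i j)) ∨ Antitone (fun j => t (i j))) := by
  have hdist : ∀ a b : Fin m, ‖q a - q b‖ = |t a - t b| := by
    intro a b; rw [hq, hq]; exact hψ _ (ht a) _ (ht b)
  -- pick a "next" point when a gap is at least lam
  have hstep : ∀ a k : Fin m, t a ≤ t k → lam ≤ t k - t a →
      ∃ b : Fin m, t a < t b ∧ t b < t a + lam ∧ t b ≤ t k := by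
    intro a k _ hgap
    have hu : t a + lam / 2 ∈ Set.Icc (0 : ℝ) L := by
      constructor
      · have := (ht a).1; linarith
      · have := (ht k).2; linarith
    obtain ⟨b, hb⟩ := hnet _ hu
    rw [abs_lt] at hb
    exact ⟨b, by linarith [hb.1, hb.2], by linarith [hb.1, hb.2], by linarith [hb.1, hb.2]⟩
  -- the forward (monotone) path construction
  have key : ∀ n : ℕ, ∀ a k : Fin m, t a ≤ t k →
      (Finset.univ.filter (fun i => t a < t i ∧ t i ≤ t k)).card ≤ n →
      ∃ (v : ℕ) (i : Fin (v + 1) → Fin m),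
        i 0 = a ∧ i (Fin.last v) = k ∧
        (∀ j : Fin v, ‖q (i j.succ) - q (i j.castSucc)‖ < lam
          ∧ t (i j.castSucc) ≤ t (i j.succ)) ∧
        (∑ j : Fin v, ‖q (i j.succ) - q (i j.castSucc)‖) = t k - t a := by
    have base : ∀ a k : Fin m, t a ≤ t k → t k - t a < lam →
        ∃ (v : ℕ) (i : Fin (v + 1) → Fin m),
          i 0 = a ∧ i (Fin.last v) = k ∧
          (∀ j : Fin v, ‖q (i j.succ) - q (i j.castSucc)‖ < lam
            ∧ t (i j.castSucc) ≤ t (i j.succ)) ∧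
          (∑ j : Fin v, ‖q (i j.succ) - q (i j.castSucc)‖) = t k - t a := by
      intro a k hak hlt
      refine ⟨1, ![a, k], rfl, rfl, ?_, ?_⟩
      · intro j
        fin_cases j
        simp only [Fin.succ, Fin.castSucc]
        constructor
        · show ‖q (![a,k] 1) - q (![a,k] 0)‖ < lam
          simp only [Matrix.cons_val_one, Matrix.head_cons, Matrix.cons_val_zero]
          rw [hdist]
          rw [abs_sub_lt_iff]; constructor <;> linarith
        · show t (![a,k] 0) ≤ t (![a,k] 1)
          simpa using hak
      · rw [Fin.sum_univ_one]
        show ‖q (![a,k] 1) - q (![a,k] 0)‖ = t k - t a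
        simp only [Matrix.cons_val_one, Matrix.head_cons, Matrix.cons_val_zero]
        rw [hdist, abs_of_nonneg (by linarith)]
    intro n
    induction n with
    | zero =>
      intro a k hak hcard
      rcases lt_or_ge (t k - t a) lam with hlt | hge
      · exact base a k hak hlt
      · obtain ⟨b, hb1, hb2, hb3⟩ := hstep a k hak hge
        exfalso
        have : b ∈ Finset.univ.filter (fun i => t a < t i ∧ t i ≤ t k) := by
          simp [hb1, hb3]
        have := Finset.card_pos.mpr ⟨b, this⟩
        omega
    | succ n ih =>
      intro a k hak hcard
      rcases lt_or_ge (t k - t a) lam with hlt | hge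
      · exact base a k hak hlt
      · obtain ⟨b, hb1, hb2, hb3⟩ := hstep a k hak hge
        have hbk : t b ≤ t k := hb3
        have hsub : Finset.univ.filter (fun i => t b < t i ∧ t i ≤ t k)
            ⊆ (Finset.univ.filter (fun i => t a < t i ∧ t i ≤ t k)).erase b := by
          intro x hx
          simp only [Finset.mem_filter, Finset.mem_univ, true_and] at hx
          rw [Finset.mem_erase]
          constructor
          · rintro rfl; exact absurd hx.1 (lt_irrefl _)
          · simp only [Finset.mem_filter, Finset.mem_univ, true_and]
            exact ⟨lt_trans hb1 hx.1, hx.2⟩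
        have hbmem : b ∈ Finset.univ.filter (fun i => t a < t i ∧ t i ≤ t k) := by
          simp [hb1, hb3]
        have hcard' : (Finset.univ.filter (fun i => t b < t i ∧ t i ≤ t k)).card ≤ n := by
          have := Finset.card_le_card hsub
          rw [Finset.card_erase_of_mem hbmem] at this
          omega
        obtain ⟨v, i, hi0, hil, histep, hisum⟩ := ih b k hbk hcard'
        refine ⟨v + 1, Fin.cons a i, Fin.cons_zero _ _, ?_, ?_, ?_⟩
        · rw [← Fin.succ_last, Fin.cons_succ]; exact hil
        · intro j
          induction j using Fin.cases with
          | zero =>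
            have e1 : (Fin.cons a i : Fin (v+2) → Fin m) (0 : Fin (v+1)).succ = b := by
              rw [Fin.cons_succ, hi0]
            have e2 : (Fin.cons a i : Fin (v+2) → Fin m) (0 : Fin (v+1)).castSucc = a := by
              simp
            rw [e1, e2, hdist]
            constructor
            · rw [abs_sub_lt_iff]; constructor <;> linarith
            · linarith
          | succ j' =>
            have e1 : (Fin.cons a i : Fin (v+2) → Fin m) j'.succ.succ = i j'.succ := by
              rw [Fin.cons_succ]
            have e2 : (Fin.cons a i : Fin (v+2) → Fin m) j'.succ.castSucc = i j'.castSucc := by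
              rw [← Fin.succ_castSucc, Fin.cons_succ]
            rw [e1, e2]
            exact histep j'
        · rw [Fin.sum_univ_succ]
          have e1 : (Fin.cons a i : Fin (v+2) → Fin m) (0 : Fin (v+1)).succ = b := by
            rw [Fin.cons_succ, hi0]
          have e2 : (Fin.cons a i : Fin (v+2) → Fin m) (0 : Fin (v+1)).castSucc = a := by
            simp
          have e3 : ∀ j' : Fin v,
              ‖q ((Fin.cons a i : Fin (v+2) → Fin m) j'.succ.succ)
                - q ((Fin.cons a i : Fin (v+2) → Fin m) j'.succ.castSucc)‖
              = ‖q (i j'.succ) - q (i j'.castSucc)‖ := by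
            intro j'
            rw [Fin.cons_succ, ← Fin.succ_castSucc, Fin.cons_succ]
          rw [e1, e2, Finset.sum_congr rfl (fun j' _ => e3 j'), hisum, hdist,
            abs_of_nonneg (by linarith)]
          ring
  -- directed version: path with monotone parameters whenever t a ≤ t k
  have dir : ∀ a k : Fin m, t a ≤ t k →
      ∃ (v : ℕ) (i : Fin (v + 1) → Fin m),
        i 0 = a ∧ i (Fin.last v) = k ∧
        (∀ j : Fin v, ‖q (i j.succ) - q (i j.castSucc)‖ < lam) ∧
        (∑ j : Fin v, ‖q (i j.succ) - q (i j.castSucc)‖) = t k - t a ∧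
        Monotone (fun j => t (i j)) := by
    intro a k hak
    obtain ⟨v, i, h0, hl, hs, hsum⟩ := key _ a k hak le_rfl
    exact ⟨v, i, h0, hl, fun j => (hs j).1, hsum,
      Fin.monotone_iff_le_succ.mpr (fun j => (hs j).2)⟩
  -- lower bound for any admissible path
  have lower : ∀ (h k : Fin m) (d : ENNReal), d ∈ { d : ENNReal | ∃ (v : ℕ) (i : Fin (v + 1) → Fin m),
      i 0 = h ∧ i (Fin.last v) = k ∧
      (∀ j : Fin v, ‖q (i j.succ) - q (i j.castSucc)‖ < lam) ∧
      d = ∑ j : Fin v, ENNReal.ofReal ‖q (i j.succ) - q (i j.castSucc)‖ } →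
      ENNReal.ofReal |t h - t k| ≤ d := by
    rintro h k d ⟨v, i, h0, hl, _, rfl⟩
    rw [← ENNReal.ofReal_sum_of_nonneg (fun j _ => norm_nonneg _)]
    apply ENNReal.ofReal_le_ofReal
    have htel := fin_telescope v (fun j => t (i j))
    calc |t h - t k| = |∑ j : Fin v, (t (i j.succ) - t (i j.castSucc))| := by
          rw [htel, h0, hl, abs_sub_comm]
      _ ≤ ∑ j : Fin v, |t (i j.succ) - t (i j.castSucc)| :=
          Finset.abs_sum_le_sum_abs _ _
      _ = ∑ j : Fin v, ‖q (i j.succ) - q (i j.castSucc)‖ := by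
          refine Finset.sum_congr rfl (fun j _ => ?_)
          rw [hdist]
  intro h k
  -- construct the witnessing monotone/antitone path from h to k
  have main : ∃ (v : ℕ) (i : Fin (v + 1) → Fin m),
      i 0 = h ∧ i (Fin.last v) = k ∧
      (∀ j : Fin v, ‖q (i j.succ) - q (i j.castSucc)‖ < lam) ∧
      (∑ j : Fin v, ‖q (i j.succ) - q (i j.castSucc)‖) = |t h - t k| ∧
      (Monotone (fun j => t (i j)) ∨ Antitone (fun j => t (i j))) := by
    rcases le_total (t h) (t k) with hle | hle
    · obtain ⟨v, i, h0, hl, hs, hsum, hmono⟩ := dir h k hle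
      exact ⟨v, i, h0, hl, hs, by rw [hsum, abs_of_nonpos (by linarith)]; ring, Or.inl hmono⟩
    · obtain ⟨v, i, h0, hl, hs, hsum, hmono⟩ := dir k h hle
      refine ⟨v, fun j => i j.rev, ?_, ?_, ?_, ?_, ?_⟩
      · show i (Fin.rev 0) = h
        rw [Fin.rev_zero, hl]
      · show i (Fin.last v).rev = k
        rw [Fin.rev_last, h0]
      · intro j
        show ‖q (i j.succ.rev) - q (i j.castSucc.rev)‖ < lam
        rw [Fin.rev_succ, Fin.rev_castSucc, norm_sub_rev]
        exact hs j.rev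
      · show (∑ j : Fin v, ‖q (i j.succ.rev) - q (i j.castSucc.rev)‖) = |t h - t k|
        calc (∑ j : Fin v, ‖q (i j.succ.rev) - q (i j.castSucc.rev)‖)
            = ∑ j : Fin v, ‖q (i j.rev.succ) - q (i j.rev.castSucc)‖ := by
              refine Finset.sum_congr rfl (fun j _ => ?_)
              rw [Fin.rev_succ, Fin.rev_castSucc, norm_sub_rev]
          _ = ∑ j : Fin v, ‖q (i j.succ) - q (i j.castSucc)‖ := by
              exact Equiv.sum_comp (Fin.revPerm) (fun j => ‖q (i j.succ) - q (i j.castSucc)‖)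
          _ = |t h - t k| := by rw [hsum, abs_of_nonneg (by linarith)]
      · right
        intro x y hxy
        have : y.rev ≤ x.rev := Fin.rev_le_rev.mpr hxy
        exact hmono this
  obtain ⟨v, i, h0, hl, hs, hsum, hmono⟩ := main
  have hsum' : (∑ j : Fin v, ENNReal.ofReal ‖q (i j.succ) - q (i j.castSucc)‖)
      = ENNReal.ofReal |t h - t k| := by
    rw [← ENNReal.ofReal_sum_of_nonneg (fun j _ => norm_nonneg _), hsum]
  constructor
  · apply le_antisymm
    · exact sInf_le ⟨v, i, h0, hl, hs, hsum'.symm⟩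
    · exact le_sInf (fun d hd => lower h k d hd)
  · exact ⟨v, i, h0, hl, hs, hsum', hmono⟩
end
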